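/- If Q ∈ Q is totally confounded with P (λ_{PQ} = 1) and Q is orthogonal in relation to P, then Q commutes with P: QP = PQ = Q, and in the orthogonal case V = Σ_Q (ξ_{c(Q)} + rη_Q) Q + Σ_P ξ_P (P ⊢ Q), exhibiting the images of these idempotents as eigenspaces of V. -/

import Mathlib

open Matrix BigOperators
open scoped Classical

lemma aux_mul_tr {m : ℕ} {A : Matrix (Fin m) (Fin m) ℝ} (h : A * Aᵀ = 0) : A = 0 := by
  have : A * Aᴴ = 0 := by rw [Matrix.conjTranspose_eq_transpose_of_trivial]; exact h
  exact Matrix.self_mul_conjTranspose_eq_zero.mp this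

/-- If `Q` is orthogonal in relation to `P` (each `Q` totally confounded with
a unique `P = c(Q)`, i.e. `λ_{c(Q),Q} = 1` and `λ_{P',Q} = 0` otherwise), then
each `Q` commutes with `c(Q)`: `Q P = P Q = Q`, and the variance matrix
decomposes as
`V = ∑_Q (ξ_{c(Q)} + rη_Q) • Q + ∑_P ξ_P • (P ⊢ Q)`, whose idempotents'
images are eigenspaces of `V`. -/
theorem stmt_19 {n : ℕ} {ιP ιQ : Type*} [Fintype ιP] [Fintype ιQ]
    (P : ιP → Matrix (Fin n) (Fin n) ℝ)
    (hPsym : ∀ i, (P i)ᵀ = P i)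
    (hPidem : ∀ i, P i * P i = P i)
    (hPorth : ∀ i j, i ≠ j → P i * P j = 0)
    (hPsum : ∑ i, P i = 1)
    (Qm : ιQ → Matrix (Fin n) (Fin n) ℝ)
    (hQsym : ∀ j, (Qm j)ᵀ = Qm j)
    (hQidem : ∀ j, Qm j * Qm j = Qm j)
    (hQorth : ∀ j k, j ≠ k → Qm j * Qm k = 0)
    (c : ιQ → ιP)
    (hconf : ∀ j, Qm j * P (c j) * Qm j = Qm j)
    (hzero : ∀ j i, i ≠ c j → Qm j * P i * Qm j = 0)
    (ξ : ιP → ℝ) (η : ιQ → ℝ) (r : ℝ) (hr : 0 < r) :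
    (∀ j, Qm j * P (c j) = Qm j ∧ P (c j) * Qm j = Qm j) ∧
    (∑ i, ξ i • P i + r • ∑ j, η j • Qm j
      = ∑ j, (ξ (c j) + r * η j) • Qm j
        + ∑ i, ξ i • (P i - ∑ j ∈ Finset.univ.filter fun j => c j = i, Qm j)) ∧
    (∀ j, (∑ i, ξ i • P i + r • ∑ j', η j' • Qm j') * Qm j
        = (ξ (c j) + r * η j) • Qm j) ∧
    (∀ i, (∑ i', ξ i' • P i' + r • ∑ j, η j • Qm j) *
          (P i - ∑ j ∈ Finset.univ.filter fun j => c j = i, Qm j)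
        = ξ i • (P i - ∑ j ∈ Finset.univ.filter fun j => c j = i, Qm j)) := by
  -- Q P(c j) = Q
  have hQP : ∀ j, Qm j * P (c j) = Qm j := by
    intro j
    have key : (Qm j * P (c j) - Qm j) * (Qm j * P (c j) - Qm j)ᵀ = 0 := by
      have ht : (Qm j * P (c j) - Qm j)ᵀ = P (c j) * Qm j - Qm j := by
        rw [Matrix.transpose_sub, Matrix.transpose_mul, hPsym, hQsym]
      rw [ht]
      have e1 : Qm j * P (c j) * (P (c j) * Qm j) = Qm j * P (c j) * Qm j := by
        rw [mul_assoc (Qm j), ← mul_assoc (P (c j)), hPidem, ← mul_assoc]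
      rw [sub_mul, mul_sub, mul_sub, e1, hconf, ← mul_assoc, hconf, hQidem]
      simp
    have := aux_mul_tr key
    exact sub_eq_zero.mp this
  have hPQ : ∀ j, P (c j) * Qm j = Qm j := by
    intro j
    have := congrArg Matrix.transpose (hQP j)
    simpa [Matrix.transpose_mul, hPsym, hQsym] using this
  -- Q P i = 0 for i ≠ c j
  have hQP0 : ∀ j i, i ≠ c j → Qm j * P i = 0 := by
    intro j i hi
    have key : (Qm j * P i) * (Qm j * P i)ᵀ = 0 := by
      rw [Matrix.transpose_mul, hPsym, hQsym]
      rw [mul_assoc (Qm j), ← mul_assoc (P i), hPidem, ← mul_assoc]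
      exact hzero j i hi
    exact aux_mul_tr key
  have hPQ0 : ∀ j i, i ≠ c j → P i * Qm j = 0 := by
    intro j i hi
    have := congrArg Matrix.transpose (hQP0 j i hi)
    rwa [Matrix.transpose_mul, hPsym, hQsym, Matrix.transpose_zero] at this
  -- rewrite the fiberwise sum
  have hfib : ∑ i, ξ i • (∑ j ∈ Finset.univ.filter fun j => c j = i, Qm j)
      = ∑ j, ξ (c j) • Qm j := by
    rw [← Finset.sum_fiberwise Finset.univ c (fun j => ξ (c j) • Qm j)]
    refine Finset.sum_congr rfl fun i _ => ?_
    rw [Finset.smul_sum]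
    exact Finset.sum_congr rfl fun j hj => by
      rw [(Finset.mem_filter.mp hj).2]
  refine ⟨fun j => ⟨hQP j, hPQ j⟩, ?_, ?_, ?_⟩
  · -- decomposition
    simp only [smul_sub]
    rw [Finset.sum_sub_distrib, hfib]
    have : ∀ j, (ξ (c j) + r * η j) • Qm j = ξ (c j) • Qm j + (r * η j) • Qm j := by
      intro j; rw [add_smul]
    simp only [this, Finset.sum_add_distrib]
    rw [Finset.smul_sum]
    simp only [smul_smul]
    abel
  · -- V Q = eigenvalue
    intro j
    rw [add_mul, Finset.sum_mul, Finset.smul_sum, Finset.sum_mul]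
    have h1 : ∑ i, ξ i • P i * Qm j = ξ (c j) • Qm j := by
      rw [Finset.sum_eq_single (c j)]
      · rw [Matrix.smul_mul, hPQ j]
      · intro i _ hi
        rw [Matrix.smul_mul, hPQ0 j i hi, smul_zero]
      · simp
    have h2 : ∑ j', r • (η j' • Qm j') * Qm j = (r * η j) • Qm j := by
      rw [Finset.sum_eq_single j]
      · rw [Matrix.smul_mul, Matrix.smul_mul, hQidem, smul_smul]
      · intro k _ hk
        rw [Matrix.smul_mul, Matrix.smul_mul, hQorth k j hk]; simp
      · simp
    rw [h1, h2, add_smul]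
  · -- V (P ⊢ Q) = ξ i (P ⊢ Q)
    intro i
    rw [mul_sub, smul_sub]
    have hVP : (∑ i', ξ i' • P i' + r • ∑ j, η j • Qm j) * P i
        = ξ i • P i + r • ∑ j ∈ Finset.univ.filter fun j => c j = i, η j • Qm j := by
      rw [add_mul, Finset.sum_mul]
      have h1 : ∑ i', ξ i' • P i' * P i = ξ i • P i := by
        rw [Finset.sum_eq_single i]
        · rw [Matrix.smul_mul, hPidem]
        · intro i' _ hi'
          rw [Matrix.smul_mul, hPorth i' i hi', smul_zero]
        · simp
      have h2 : (r • ∑ j, η j • Qm j) * P i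
          = r • ∑ j ∈ Finset.univ.filter fun j => c j = i, η j • Qm j := by
        rw [Matrix.smul_mul, Finset.sum_mul]
        congr 1
        rw [← Finset.sum_filter_add_sum_filter_not Finset.univ (fun j => c j = i)
          (fun j => η j • Qm j * P i)]
        have hz : ∑ j ∈ Finset.univ.filter fun j => ¬ c j = i, η j • Qm j * P i = 0 := by
          refine Finset.sum_eq_zero fun j hj => ?_
          have : i ≠ c j := fun h => (Finset.mem_filter.mp hj).2 h.symm
          rw [Matrix.smul_mul, hQP0 j i this, smul_zero]
        rw [hz, add_zero]
        refine Finset.sum_congr rfl fun j hj => ?_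
        have : c j = i := (Finset.mem_filter.mp hj).2
        rw [Matrix.smul_mul, ← this, hQP j]
      rw [h1, h2]
    have hVQ : (∑ i', ξ i' • P i' + r • ∑ j, η j • Qm j) *
        (∑ j ∈ Finset.univ.filter fun j => c j = i, Qm j)
        = ∑ j ∈ Finset.univ.filter fun j => c j = i, (ξ (c j) + r * η j) • Qm j := by
      rw [Matrix.mul_sum]
      refine Finset.sum_congr rfl fun j hj => ?_
      -- reuse the eigen computation
      rw [add_mul, Finset.sum_mul, Finset.smul_sum, Finset.sum_mul]
      have h1 : ∑ i', ξ i' • P i' * Qm j = ξ (c j) • Qm j := by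
        rw [Finset.sum_eq_single (c j)]
        · rw [Matrix.smul_mul, hPQ j]
        · intro i' _ hi'
          rw [Matrix.smul_mul, hPQ0 j i' hi', smul_zero]
        · simp
      have h2 : ∑ j', r • (η j' • Qm j') * Qm j = (r * η j) • Qm j := by
        rw [Finset.sum_eq_single j]
        · rw [Matrix.smul_mul, Matrix.smul_mul, hQidem, smul_smul]
        · intro k _ hk
          rw [Matrix.smul_mul, Matrix.smul_mul, hQorth k j hk]; simp
        · simp
      rw [h1, h2, add_smul]
    rw [hVP, hVQ]
    have : ∑ j ∈ Finset.univ.filter fun j => c j = i, (ξ (c j) + r * η j) • Qm j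
        = ξ i • (∑ j ∈ Finset.univ.filter fun j => c j = i, Qm j)
          + r • ∑ j ∈ Finset.univ.filter fun j => c j = i, η j • Qm j := by
      rw [Finset.smul_sum, Finset.smul_sum, ← Finset.sum_add_distrib]
      refine Finset.sum_congr rfl fun j hj => ?_
      have hc : c j = i := (Finset.mem_filter.mp hj).2
      rw [hc, add_smul, smul_smul]
    rw [this]
    abel
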